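/- Let G be a finite connected simple graph with at least one edge such that cp(G) = ρ(G) − ω(G) + 1 + ⌈δ(G)/(ω(G)−1)⌉. Then ω(G)−1 divides δ(G), G is regular, and G admits a K_{ω(G)}-decomposition in which any two distinct cliques intersect in exactly one vertex. -/

import Mathlib

open Finset SimpleGraph Polynomial

variable {V : Type*}

/-- A clique partition of `G`: a set of cliques of `G` such that every edge of `G`
lies in exactly one of them. -/
def IsCliquePartition [DecidableEq V] (G : SimpleGraph V) (P : Finset (Finset V)) : Prop :=
  (∀ s ∈ P, G.IsClique (s : Set V)) ∧
    ∀ u v : V, G.Adj u v → ∃! s, s ∈ P ∧ u ∈ s ∧ v ∈ s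

/-- The spectral radius of a finite graph: the largest eigenvalue of its adjacency matrix. -/
noncomputable def specRad [Fintype V] [DecidableEq V] (G : SimpleGraph V)
    [DecidableRel G.Adj] : ℝ :=
  sSup {μ : ℝ | Module.End.HasEigenvalue (Matrix.toLin' (G.adjMatrix ℝ)) μ}

/-- `cpT G t` : the minimum number of cliques in a clique partition of `G` in which
every clique has at most `t` vertices. -/
noncomputable def cpT [DecidableEq V] (G : SimpleGraph V) (t : ℕ) : ℕ :=
  sInf {m | ∃ P : Finset (Finset V),
    IsCliquePartition G P ∧ (∀ s ∈ P, s.card ≤ t) ∧ P.card = m}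

/-- `cp G` : the clique partition number of `G`. -/
noncomputable def cp [DecidableEq V] (G : SimpleGraph V) : ℕ :=
  sInf {m | ∃ P : Finset (Finset V), IsCliquePartition G P ∧ P.card = m}

section Comb

variable [Fintype V] [DecidableEq V] {G : SimpleGraph V} {P : Finset (Finset V)}

lemma edge_partition (G : SimpleGraph V) [DecidableRel G.Adj] :
    ∃ P : Finset (Finset V), IsCliquePartition G P := by
  classical
  refine ⟨Finset.univ.filter fun s : Finset V => ∃ u v, G.Adj u v ∧ s = {u, v}, ?_, ?_⟩
  · intro s hs
    obtain ⟨u, v, huv, rfl⟩ := (Finset.mem_filter.mp hs).2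
    have : (({u, v} : Finset V) : Set V) = {u, v} := by simp
    rw [this]
    exact isClique_pair.mpr fun _ => huv
  · intro u v huv
    refine ⟨{u, v}, ⟨Finset.mem_filter.mpr ⟨Finset.mem_univ _, u, v, huv, rfl⟩,
      by simp, by simp⟩, ?_⟩
    rintro s ⟨hs, hu, hv⟩
    obtain ⟨a, b, hab, rfl⟩ := (Finset.mem_filter.mp hs).2
    refine (Finset.eq_of_subset_of_card_le ?_ ?_).symm
    · intro z hz
      simp only [Finset.mem_insert, Finset.mem_singleton] at hz
      rcases hz with rfl | rfl
      · exact hu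
      · exact hv
    · rw [Finset.card_pair huv.ne]
      exact (Finset.card_insert_le _ _).trans (by simp)

lemma exists_min_partition (G : SimpleGraph V) [DecidableRel G.Adj] :
    ∃ P : Finset (Finset V), IsCliquePartition G P ∧ P.card = cp G := by
  obtain ⟨P₀, hP₀⟩ := edge_partition G
  have : cp G ∈ {m | ∃ P : Finset (Finset V), IsCliquePartition G P ∧ P.card = m} :=
    Nat.sInf_mem ⟨P₀.card, P₀, hP₀, rfl⟩
  exact this

omit [Fintype V] in
lemma min_partition_two_le [Fintype V] (hP : IsCliquePartition G P) (hcard : P.card = cp G) :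
    ∀ s ∈ P, 2 ≤ s.card := by
  intro s hs
  by_contra h
  push_neg at h
  have hP' : IsCliquePartition G (P.erase s) := by
    refine ⟨fun t ht => hP.1 t (Finset.mem_of_mem_erase ht), fun u v huv => ?_⟩
    obtain ⟨Q, ⟨hQ, hu, hv⟩, huniq⟩ := hP.2 u v huv
    have hQs : Q ≠ s := by
      rintro rfl
      have : 2 ≤ Q.card := Finset.one_lt_card.mpr ⟨u, hu, v, hv, huv.ne⟩
      omega
    exact ⟨Q, ⟨Finset.mem_erase.mpr ⟨hQs, hQ⟩, hu, hv⟩,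
      fun t ⟨ht, htu, htv⟩ => huniq t ⟨Finset.mem_of_mem_erase ht, htu, htv⟩⟩
  have h1 : cp G ≤ (P.erase s).card := Nat.sInf_le ⟨P.erase s, hP', rfl⟩
  have h2 : (P.erase s).card = P.card - 1 := Finset.card_erase_of_mem hs
  have h3 : 1 ≤ P.card := Finset.card_pos.mpr ⟨s, hs⟩
  omega

omit [Fintype V] in
lemma inter_card_le_one (hP : IsCliquePartition G P) :
    ∀ s ∈ P, ∀ t ∈ P, s ≠ t → (s ∩ t).card ≤ 1 := by
  intro s hs t ht hst
  by_contra h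
  push_neg at h
  obtain ⟨u, hu, v, hv, huv⟩ := Finset.one_lt_card.mp h
  simp only [Finset.mem_inter] at hu hv
  have hadj : G.Adj u v := hP.1 s hs hu.1 hv.1 huv
  obtain ⟨Q, _, huniq⟩ := hP.2 u v hadj
  exact hst ((huniq s ⟨hs, hu.1, hv.1⟩).trans (huniq t ⟨ht, hu.2, hv.2⟩).symm)

omit [Fintype V] in
lemma nbhd_disj (hP : IsCliquePartition G P) (v : V) :
    Set.PairwiseDisjoint ↑(P.filter (v ∈ ·)) (fun Q : Finset V => Q.erase v) := by
  intro Q₁ h₁ Q₂ h₂ hne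
  simp only [Finset.coe_filter, Set.mem_setOf_eq] at h₁ h₂
  rw [Function.onFun, Finset.disjoint_left]
  intro u hu₁ hu₂
  simp only [Finset.mem_erase] at hu₁ hu₂
  have hadj : G.Adj u v := hP.1 Q₁ h₁.1 hu₁.2 h₁.2 hu₁.1
  obtain ⟨Q, _, huniq⟩ := hP.2 u v hadj
  exact hne ((huniq Q₁ ⟨h₁.1, hu₁.2, h₁.2⟩).trans (huniq Q₂ ⟨h₂.1, hu₂.2, h₂.2⟩).symm)

lemma nbhd_biUnion [DecidableRel G.Adj] (hP : IsCliquePartition G P) (v : V) :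
    (P.filter (v ∈ ·)).biUnion (fun Q => Q.erase v) = G.neighborFinset v := by
  ext u
  simp only [SimpleGraph.mem_neighborFinset, Finset.mem_biUnion, Finset.mem_filter,
    Finset.mem_erase]
  constructor
  · rintro ⟨Q, ⟨hQ, hv'⟩, hne, hu⟩
    exact hP.1 Q hQ hv' hu (Ne.symm hne)
  · intro huv
    obtain ⟨Q, ⟨hQ, hv', hu⟩, _⟩ := hP.2 v u huv
    exact ⟨Q, ⟨hQ, hv'⟩, huv.ne', hu⟩

lemma degree_eq_sum (G : SimpleGraph V) [DecidableRel G.Adj] (hP : IsCliquePartition G P)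
    (v : V) : G.degree v = ∑ Q ∈ P.filter (v ∈ ·), (Q.card - 1) := by
  classical
  rw [← SimpleGraph.card_neighborFinset_eq_degree, ← nbhd_biUnion hP v,
    Finset.card_biUnion (fun Q₁ h₁ Q₂ h₂ hne => nbhd_disj hP v h₁ h₂ hne)]
  refine Finset.sum_congr rfl fun Q hQ => ?_
  exact Finset.card_erase_of_mem (Finset.mem_filter.mp hQ).2

end Comb

lemma perron [Fintype V] [DecidableEq V] (G : SimpleGraph V) [DecidableRel G.Adj]
    (hconn : G.Connected) [Nonempty V] :
    ∃ x : V → ℝ, (∀ v, 0 < x v) ∧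
      ∀ v, ∑ u, G.adjMatrix ℝ v u * x u = specRad G * x v := by
  classical
  set A := G.adjMatrix ℝ with hA
  have hAnn : ∀ u v, 0 ≤ A u v := by
    intro u v; simp only [hA, SimpleGraph.adjMatrix_apply]; positivity
  have hherm : A.IsHermitian := by
    rw [Matrix.IsHermitian, Matrix.conjTranspose_eq_transpose_of_trivial]
    exact G.isSymm_adjMatrix
  have hsym : (Matrix.toEuclideanLin A).IsSymmetric :=
    Matrix.isHermitian_iff_isSymmetric.mp hherm
  set T : EuclideanSpace ℝ V →ₗ[ℝ] EuclideanSpace ℝ V := Matrix.toEuclideanLin A with hT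
  have hTapp : ∀ (z : EuclideanSpace ℝ V) (v : V), T z v = ∑ u, A v u * z u := by
    intro z v; rfl
  have hinner : ∀ z y : EuclideanSpace ℝ V, (inner ℝ z y : ℝ) = ∑ v, z v * y v := by
    intro z y
    simp [PiLp.inner_apply, RCLike.inner_apply, mul_comm]
  haveI : Nontrivial (EuclideanSpace ℝ V) := by
    obtain ⟨v₀⟩ := ‹Nonempty V›
    refine ⟨EuclideanSpace.single v₀ (1:ℝ), 0, fun h => ?_⟩
    have := congrArg (fun f : EuclideanSpace ℝ V => f v₀) h
    simp [EuclideanSpace.single_apply] at this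
  set T' : EuclideanSpace ℝ V →L[ℝ] EuclideanSpace ℝ V :=
    LinearMap.toContinuousLinearMap T with hT'
  have hT'app : ∀ z, T' z = T z := fun z => rfl
  have hT'sa : IsSelfAdjoint T' := by
    rw [ContinuousLinearMap.isSelfAdjoint_iff_isSymmetric]
    exact hsym
  set R : ℝ := ⨆ x : {x : EuclideanSpace ℝ V // x ≠ 0}, T'.rayleighQuotient x with hR
  have hRmem : Module.End.HasEigenvalue T R := by
    have h := hsym.hasEigenvalue_iSup_of_finiteDimensional
    have heq : (⨆ x : {x : EuclideanSpace ℝ V // x ≠ 0},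
        RCLike.re (inner ℝ (T x) (x : EuclideanSpace ℝ V) : ℝ) / ‖(x : EuclideanSpace ℝ V)‖ ^ 2) = R := by
      refine iSup_congr fun x => ?_
      simp [ContinuousLinearMap.rayleighQuotient, ContinuousLinearMap.reApplyInnerSelf, hT'app]
    rw [heq] at h
    simpa using h
  set S := {μ : ℝ | Module.End.HasEigenvalue (Matrix.toLin' A) μ} with hS
  have hST : S = {μ : ℝ | Module.End.HasEigenvalue T μ} := by
    rw [hS]; ext μ; simp only [Set.mem_setOf_eq]
    rw [Module.End.hasEigenvalue_iff_isRoot_charpoly, Module.End.hasEigenvalue_iff_isRoot_charpoly,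
      Matrix.charpoly_toLin', hT, Matrix.toEuclideanLin_eq_toLin_orthonormal, Matrix.charpoly_toLin]
  have hfin : S.Finite := by
    rw [hST]
    exact Module.End.finite_hasEigenvalue T
  have hbddR : BddAbove (Set.range fun x : {x : EuclideanSpace ℝ V // x ≠ 0} =>
      T'.rayleighQuotient x) := by
    refine ⟨‖T'‖, ?_⟩
    rintro _ ⟨⟨z, hz⟩, rfl⟩
    have hz2 : (0:ℝ) < ‖z‖ ^ 2 := pow_pos (norm_pos_iff.mpr hz) 2
    show T'.reApplyInnerSelf z / ‖z‖ ^ 2 ≤ ‖T'‖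
    rw [div_le_iff₀ hz2]
    have h1 : T'.reApplyInnerSelf z ≤ ‖T' z‖ * ‖z‖ := by
      rw [ContinuousLinearMap.reApplyInnerSelf]
      simpa using real_inner_le_norm (T' z) z
    calc T'.reApplyInnerSelf z ≤ ‖T' z‖ * ‖z‖ := h1
    _ ≤ (‖T'‖ * ‖z‖) * ‖z‖ := by gcongr; exact T'.le_opNorm z
    _ = ‖T'‖ * ‖z‖ ^ 2 := by ring
  have hrayle : ∀ z : EuclideanSpace ℝ V, z ≠ 0 → T'.reApplyInnerSelf z ≤ R * ‖z‖ ^ 2 := by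
    intro z hz
    have h := le_ciSup hbddR ⟨z, hz⟩
    have h' : T'.reApplyInnerSelf z / ‖z‖ ^ 2 ≤ R := h
    rw [div_le_iff₀ (pow_pos (norm_pos_iff.mpr hz) 2)] at h'
    linarith [h']
  have hmuleR : ∀ μ ∈ S, μ ≤ R := by
    intro μ hμ
    rw [hST] at hμ
    obtain ⟨w, hwmem, hw0⟩ := hμ.exists_hasEigenvector
    have hweq : T w = μ • w := Module.End.mem_eigenspace_iff.mp hwmem
    have : T'.reApplyInnerSelf w = μ * ‖w‖ ^ 2 := by
      rw [ContinuousLinearMap.reApplyInnerSelf, hT'app, hweq, real_inner_smul_left,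
        real_inner_self_eq_norm_sq]
      simp
    have h2 := hrayle w hw0
    rw [this] at h2
    have hw2 : (0:ℝ) < ‖w‖ ^ 2 := pow_pos (norm_pos_iff.mpr hw0) 2
    nlinarith
  have hρmem : specRad G ∈ S := by
    have : specRad G = sSup S := rfl
    rw [this]
    exact Set.Nonempty.csSup_mem ⟨R, by rw [hST]; exact hRmem⟩ hfin
  have hρR : specRad G = R := by
    refine le_antisymm (hmuleR _ hρmem) ?_
    have : specRad G = sSup S := rfl
    rw [this]
    exact le_csSup hfin.bddAbove (by rw [hST]; exact hRmem)
  have hρT : Module.End.HasEigenvalue T (specRad G) := by rw [hST] at hρmem; exact hρmem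
  obtain ⟨w, hwmem, hw0⟩ := hρT.exists_hasEigenvector
  have hweq : T w = specRad G • w := Module.End.mem_eigenspace_iff.mp hwmem
  set w' : EuclideanSpace ℝ V := WithLp.toLp 2 (fun v => |w v|) with hw'
  have hw'w : ‖w'‖ = ‖w‖ := by
    rw [EuclideanSpace.norm_eq, EuclideanSpace.norm_eq]
    congr 1
    refine Finset.sum_congr rfl fun v _ => ?_
    simp [hw']
  have hw'0 : w' ≠ 0 := by
    intro h
    apply hw0
    ext v
    have := congrArg (fun f : EuclideanSpace ℝ V => f v) h
    simpa [hw'] using this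
  have hρw : T'.reApplyInnerSelf w = specRad G * ‖w‖ ^ 2 := by
    rw [ContinuousLinearMap.reApplyInnerSelf, hT'app, hweq, real_inner_smul_left,
      real_inner_self_eq_norm_sq]
    simp
  have hraylower : specRad G * ‖w'‖ ^ 2 ≤ T'.reApplyInnerSelf w' := by
    rw [hw'w, ← hρw]
    rw [ContinuousLinearMap.reApplyInnerSelf, ContinuousLinearMap.reApplyInnerSelf,
      hT'app, hT'app]
    have e1 : (inner ℝ (T w) w : ℝ) = ∑ v, (∑ u, A v u * w u) * w v := by
      rw [hinner]; exact Finset.sum_congr rfl fun v _ => by rw [hTapp]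
    have e2 : (inner ℝ (T w') w' : ℝ) = ∑ v, (∑ u, A v u * w' u) * w' v := by
      rw [hinner]; exact Finset.sum_congr rfl fun v _ => by rw [hTapp]
    simp only [RCLike.re_to_real, e1, e2]
    refine Finset.sum_le_sum fun v _ => ?_
    rw [Finset.sum_mul, Finset.sum_mul]
    refine Finset.sum_le_sum fun u _ => ?_
    calc A v u * w u * w v ≤ |A v u * w u * w v| := le_abs_self _
    _ = A v u * |w u| * |w v| := by
        rw [abs_mul, abs_mul, abs_of_nonneg (hAnn v u)]
    _ = A v u * w' u * w' v := rfl
  have hmaxOn : IsMaxOn T'.reApplyInnerSelf (Metric.sphere (0:EuclideanSpace ℝ V) ‖w'‖) w' := by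
    intro z hz
    have hzn : ‖z‖ = ‖w'‖ := by simpa [mem_sphere_zero_iff_norm] using hz
    have hz0 : z ≠ 0 := by
      intro h
      rw [h, norm_zero] at hzn
      exact hw'0 (norm_eq_zero.mp hzn.symm)
    calc T'.reApplyInnerSelf z ≤ R * ‖z‖ ^ 2 := hrayle z hz0
    _ = specRad G * ‖w'‖ ^ 2 := by rw [hρR, hzn]
    _ ≤ T'.reApplyInnerSelf w' := hraylower
  have hev := hT'sa.hasEigenvector_of_isMaxOn hw'0 hmaxOn
  have hsup : (⨆ x : {x : EuclideanSpace ℝ V // x ≠ 0}, T'.rayleighQuotient x) = R := rfl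
  have hw'eq : T w' = specRad G • w' := by
    have h1 := Module.End.mem_eigenspace_iff.mp hev.1
    rw [hsup] at h1
    rw [← hρR] at h1
    simpa [hT'app] using h1
  have hpoint : ∀ v, ∑ u, A v u * w' u = specRad G * w' v := by
    intro v
    have := congrArg (fun f : EuclideanSpace ℝ V => f v) hw'eq
    rw [hTapp] at this
    simpa using this
  have hstep : ∀ b, w' b = 0 → ∀ a, G.Adj b a → w' a = 0 := by
    intro b hb a hab
    have hsum : ∑ u, A b u * w' u = 0 := by rw [hpoint, hb, mul_zero]
    have hterm : ∀ u ∈ Finset.univ, (0:ℝ) ≤ A b u * w' u := by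
      intro u _
      exact mul_nonneg (hAnn b u) (abs_nonneg _)
    have := (Finset.sum_eq_zero_iff_of_nonneg hterm).mp hsum a (Finset.mem_univ a)
    have hba : A b a = 1 := by simp [hA, hab]
    rw [hba, one_mul] at this
    exact this
  have hwalk : ∀ {c d : V} (_ : G.Walk c d), w' c = 0 → w' d = 0 := by
    intro c d p
    induction p with
    | nil => exact id
    | cons h _ ih => exact fun h0 => ih (hstep _ h0 _ h)
  have hpos : ∀ v, 0 < w' v := by
    by_contra h
    push_neg at h
    obtain ⟨v, hv⟩ := h
    have hv0 : w' v = 0 := le_antisymm hv (abs_nonneg _)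
    apply hw'0
    ext u
    exact hwalk (hconn.preconnected v u).some hv0
  exact ⟨w', hpos, hpoint⟩

set_option maxHeartbeats 2000000 in
/-- Equality case of the spectral lower bound for `cp(G)`:
if `cp(G) = ρ(G) − ω(G) + 1 + ⌈δ(G)/(ω(G)−1)⌉`, then `ω(G)−1` divides `δ(G)`, `G`
is regular, and `G` admits a `K_{ω(G)}`-decomposition in which any two distinct
cliques intersect in exactly one vertex. -/
theorem regular_decomposition_of_cp_eq [Fintype V] [DecidableEq V] (G : SimpleGraph V)
    [DecidableRel G.Adj] (hconn : G.Connected) (hedge : G.edgeSet.Nonempty)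
    (heq : (cp G : ℝ) = specRad G - G.cliqueNum + 1 +
      (⌈(G.minDegree : ℝ) / ((G.cliqueNum : ℝ) - 1)⌉ : ℤ)) :
    (G.cliqueNum - 1) ∣ G.minDegree ∧ (∃ d, G.IsRegularOfDegree d) ∧
      ∃ P : Finset (Finset V), IsCliquePartition G P ∧ (∀ s ∈ P, s.card = G.cliqueNum) ∧
        ∀ s₁ ∈ P, ∀ s₂ ∈ P, s₁ ≠ s₂ → (s₁ ∩ s₂).card = 1 := by
  classical
  obtain ⟨u₀, v₀, huv₀⟩ : ∃ u v, G.Adj u v := by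
    obtain ⟨e, he⟩ := hedge
    induction e with
    | _ u v => exact ⟨u, v, he⟩
  haveI : Nonempty V := ⟨u₀⟩
  set ω := G.cliqueNum with hω
  set δ := G.minDegree with hδ
  set ρ := specRad G with hρ
  set k : ℤ := ⌈(δ : ℝ) / ((ω : ℝ) - 1)⌉ with hk
  have hω2 : 2 ≤ ω := by
    have hcl : G.IsClique (({u₀, v₀} : Finset V) : Set V) := by
      rw [Finset.coe_insert, Finset.coe_singleton]
      exact isClique_pair.mpr fun _ => huv₀
    have := @SimpleGraph.IsClique.card_le_cliqueNum V G _ {u₀, v₀} hcl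
    rwa [Finset.card_pair huv₀.ne] at this
  have hω1pos : (0:ℝ) < (ω : ℝ) - 1 := by
    have : (2:ℝ) ≤ (ω : ℝ) := by exact_mod_cast hω2
    linarith
  obtain ⟨P, hP, hPcard⟩ := exists_min_partition G
  have h2le := min_partition_two_le hP hPcard
  have hQω : ∀ s ∈ P, s.card ≤ ω := fun s hs =>
    @SimpleGraph.IsClique.card_le_cliqueNum V G _ s (hP.1 s hs)
  have hPne : P.Nonempty := by
    obtain ⟨Q, ⟨hQ, _, _⟩, _⟩ := hP.2 u₀ v₀ huv₀
    exact ⟨Q, hQ⟩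
  set m := P.card with hm
  have hm1 : 1 ≤ m := Finset.card_pos.mpr hPne
  obtain ⟨x, hxpos, hxev⟩ := perron G hconn
  set X := ∑ v, x v ^ 2 with hX
  have hXpos : 0 < X :=
    Finset.sum_pos (fun v _ => pow_pos (hxpos v) 2) Finset.univ_nonempty
  set d : V → ℕ := fun v => (P.filter (v ∈ ·)).card with hd
  set S : Finset V → ℝ := fun Q => ∑ v ∈ Q, x v with hSdef
  have hSpos : ∀ Q ∈ P, 0 < S Q := fun Q hQ =>
    Finset.sum_pos (fun v _ => hxpos v) (Finset.card_pos.mp (by have := h2le Q hQ; omega))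
  set L := ∑ Q ∈ P, S Q ^ 2 with hLdef
  have hLpos : 0 < L := Finset.sum_pos (fun Q hQ => pow_pos (hSpos Q hQ) 2) hPne
  -- swapping sums between vertices and cliques
  have swap : ∀ f : V → Finset V → ℝ,
      ∑ v, ∑ Q ∈ P.filter (v ∈ ·), f v Q = ∑ Q ∈ P, ∑ v ∈ Q, f v Q := by
    intro f
    simp only [Finset.sum_filter]
    rw [Finset.sum_comm]
    refine Finset.sum_congr rfl fun Q _ => ?_
    rw [Finset.sum_ite_mem, Finset.univ_inter]
  set z : V → ℝ := fun v => ∑ Q ∈ P.filter (v ∈ ·), S Q with hzdef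
  have hzv : ∀ v, z v = ρ * x v + (d v : ℝ) * x v := by
    intro v
    have e1 : z v = ∑ Q ∈ P.filter (v ∈ ·), (x v + ∑ u ∈ Q.erase v, x u) := by
      refine Finset.sum_congr rfl fun Q hQ => ?_
      have hv : v ∈ Q := (Finset.mem_filter.mp hQ).2
      rw [hSdef]
      exact (Finset.add_sum_erase Q x hv).symm
    have e2 : ∑ Q ∈ P.filter (v ∈ ·), ∑ u ∈ Q.erase v, x u = ∑ u, G.adjMatrix ℝ v u * x u := by
      rw [← Finset.sum_biUnion (nbhd_disj hP v), nbhd_biUnion hP v]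
      rw [SimpleGraph.neighborFinset_eq_filter]
      rw [Finset.sum_filter]
      refine Finset.sum_congr rfl fun u _ => ?_
      by_cases hadj : G.Adj v u <;> simp [hadj]
    rw [e1, Finset.sum_add_distrib, Finset.sum_const, e2, hxev v]
    simp only [hd, nsmul_eq_mul]
    push_cast
    ring
  have hxz : ∑ v, x v * z v = L := by
    calc ∑ v, x v * z v = ∑ v, ∑ Q ∈ P.filter (v ∈ ·), x v * S Q := by
          refine Finset.sum_congr rfl fun v _ => ?_
          simp only [hzdef]
          rw [Finset.mul_sum]
    _ = ∑ Q ∈ P, ∑ v ∈ Q, x v * S Q := swap _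
    _ = L := by
          refine Finset.sum_congr rfl fun Q _ => ?_
          rw [← Finset.sum_mul]
          exact (pow_two (S Q)).symm
  have hLeq : L = ρ * X + ∑ v, (d v : ℝ) * x v ^ 2 := by
    rw [← hxz]
    calc ∑ v, x v * z v = ∑ v, (ρ * x v ^ 2 + (d v : ℝ) * x v ^ 2) := by
          refine Finset.sum_congr rfl fun v _ => ?_
          rw [hzv v]; ring
    _ = ρ * X + ∑ v, (d v : ℝ) * x v ^ 2 := by
          rw [Finset.sum_add_distrib, hX, Finset.mul_sum]
  have hdk : ∀ v, (k : ℝ) ≤ (d v : ℝ) := by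
    intro v
    have h1 : δ ≤ G.degree v := G.minDegree_le_degree v
    have h2 : G.degree v = ∑ Q ∈ P.filter (v ∈ ·), (Q.card - 1) := degree_eq_sum G hP v
    have h3 : ∑ Q ∈ P.filter (v ∈ ·), (Q.card - 1) ≤ d v * (ω - 1) := by
      calc ∑ Q ∈ P.filter (v ∈ ·), (Q.card - 1) ≤ ∑ _Q ∈ P.filter (v ∈ ·), (ω - 1) := by
            refine Finset.sum_le_sum fun Q hQ => ?_
            have := hQω Q (Finset.mem_filter.mp hQ).1
            omega
      _ = d v * (ω - 1) := by rw [Finset.sum_const, smul_eq_mul]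
    have hnat : δ ≤ d v * (ω - 1) := h2 ▸ h1 |>.trans h3
    have hreal : (δ : ℝ) ≤ (d v : ℝ) * ((ω : ℝ) - 1) := by
      have := Nat.cast_le (α := ℝ) |>.mpr hnat
      push_cast [Nat.cast_sub (by omega : 1 ≤ ω)] at this
      linarith
    have hkle : k ≤ (d v : ℤ) := by
      rw [hk]
      refine Int.ceil_le.mpr ?_
      rw [div_le_iff₀ hω1pos]
      push_cast
      linarith
    exact_mod_cast hkle
  have hlow : (ρ + (k : ℝ)) * X ≤ L := by
    have hkX : (k : ℝ) * X ≤ ∑ v, (d v : ℝ) * x v ^ 2 := by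
      rw [hX, Finset.mul_sum]
      exact Finset.sum_le_sum fun v _ => mul_le_mul_of_nonneg_right (hdk v) (sq_nonneg _)
    have := hLeq
    nlinarith
  have hCS : L ^ 2 ≤ X * ∑ v, z v ^ 2 := by
    have h := Finset.sum_mul_sq_le_sq_mul_sq Finset.univ x z
    rw [hxz] at h
    exact h
  set c : ℝ := (ω : ℝ) + (m : ℝ) - 1 with hcdef
  set row : Finset V → ℝ := fun Q => ∑ Q' ∈ P, ((Q ∩ Q').card : ℝ) with hrowdef
  have hz2 : ∑ v, z v ^ 2 = ∑ Q ∈ P, ∑ Q' ∈ P, ((Q ∩ Q').card : ℝ) * (S Q * S Q') := by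
    have hinner2 : ∀ Q : Finset V, ∑ v ∈ Q, z v = ∑ Q' ∈ P, ((Q ∩ Q').card : ℝ) * S Q' := by
      intro Q
      calc ∑ v ∈ Q, z v = ∑ v ∈ Q, ∑ Q' ∈ P, if v ∈ Q' then S Q' else 0 := by
            refine Finset.sum_congr rfl fun v _ => ?_
            simp only [hzdef]
            rw [Finset.sum_filter]
      _ = ∑ Q' ∈ P, ∑ v ∈ Q, if v ∈ Q' then S Q' else 0 := Finset.sum_comm
      _ = ∑ Q' ∈ P, ((Q ∩ Q').card : ℝ) * S Q' := by
            refine Finset.sum_congr rfl fun Q' _ => ?_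
            rw [Finset.sum_ite_mem, Finset.sum_const, nsmul_eq_mul]
    calc ∑ v, z v ^ 2 = ∑ v, ∑ Q ∈ P.filter (v ∈ ·), S Q * z v := by
          refine Finset.sum_congr rfl fun v _ => ?_
          rw [sq]
          simp only [hzdef]
          rw [Finset.sum_mul]
    _ = ∑ Q ∈ P, ∑ v ∈ Q, S Q * z v := swap _
    _ = ∑ Q ∈ P, S Q * ∑ v ∈ Q, z v := by
          refine Finset.sum_congr rfl fun Q _ => ?_
          rw [Finset.mul_sum]
    _ = ∑ Q ∈ P, ∑ Q' ∈ P, ((Q ∩ Q').card : ℝ) * (S Q * S Q') := by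
          refine Finset.sum_congr rfl fun Q _ => ?_
          rw [hinner2 Q, Finset.mul_sum]
          refine Finset.sum_congr rfl fun Q' _ => ?_
          ring
  have hz2le : ∑ Q ∈ P, ∑ Q' ∈ P, ((Q ∩ Q').card : ℝ) * (S Q * S Q')
      ≤ ∑ Q ∈ P, row Q * S Q ^ 2 := by
    have step1 : ∑ Q ∈ P, ∑ Q' ∈ P, ((Q ∩ Q').card : ℝ) * (S Q * S Q')
        ≤ ∑ Q ∈ P, ∑ Q' ∈ P, ((Q ∩ Q').card : ℝ) * (S Q ^ 2 + S Q' ^ 2) / 2 := by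
      refine Finset.sum_le_sum fun Q _ => Finset.sum_le_sum fun Q' _ => ?_
      have h1 : (0:ℝ) ≤ ((Q ∩ Q').card : ℝ) := Nat.cast_nonneg _
      nlinarith [sq_nonneg (S Q - S Q')]
    have step2 : ∑ Q ∈ P, ∑ Q' ∈ P, ((Q ∩ Q').card : ℝ) * (S Q ^ 2 + S Q' ^ 2) / 2
        = ∑ Q ∈ P, row Q * S Q ^ 2 := by
      have half : ∑ Q ∈ P, ∑ Q' ∈ P, ((Q ∩ Q').card : ℝ) * (S Q ^ 2 / 2)
          = ∑ Q ∈ P, row Q * S Q ^ 2 / 2 := by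
        refine Finset.sum_congr rfl fun Q _ => ?_
        rw [← Finset.sum_mul]
        simp only [hrowdef]
        ring
      have e1 : ∑ Q ∈ P, ∑ Q' ∈ P, ((Q ∩ Q').card : ℝ) * (S Q ^ 2 + S Q' ^ 2) / 2
          = (∑ Q ∈ P, ∑ Q' ∈ P, ((Q ∩ Q').card : ℝ) * (S Q ^ 2 / 2))
            + ∑ Q ∈ P, ∑ Q' ∈ P, ((Q ∩ Q').card : ℝ) * (S Q' ^ 2 / 2) := by
        rw [← Finset.sum_add_distrib]
        refine Finset.sum_congr rfl fun Q _ => ?_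
        rw [← Finset.sum_add_distrib]
        refine Finset.sum_congr rfl fun Q' _ => ?_
        ring
      have e2 : ∑ Q ∈ P, ∑ Q' ∈ P, ((Q ∩ Q').card : ℝ) * (S Q' ^ 2 / 2)
          = ∑ Q ∈ P, ∑ Q' ∈ P, ((Q ∩ Q').card : ℝ) * (S Q ^ 2 / 2) := by
        rw [Finset.sum_comm]
        refine Finset.sum_congr rfl fun Q _ => Finset.sum_congr rfl fun Q' _ => ?_
        rw [Finset.inter_comm]
      rw [e1, e2, half, ← Finset.sum_add_distrib]
      refine Finset.sum_congr rfl fun Q _ => ?_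
      ring
    calc ∑ Q ∈ P, ∑ Q' ∈ P, ((Q ∩ Q').card : ℝ) * (S Q * S Q')
        ≤ ∑ Q ∈ P, ∑ Q' ∈ P, ((Q ∩ Q').card : ℝ) * (S Q ^ 2 + S Q' ^ 2) / 2 := step1
    _ = ∑ Q ∈ P, row Q * S Q ^ 2 := step2
  have hrow_split : ∀ Q ∈ P, row Q = (Q.card : ℝ) + ∑ Q' ∈ P.erase Q, ((Q ∩ Q').card : ℝ) := by
    intro Q hQ
    simp only [hrowdef]
    rw [← Finset.sum_erase_add P _ hQ, Finset.inter_self]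
    ring
  have hinter_le : ∀ Q ∈ P, ∀ Q' ∈ P.erase Q, (Q ∩ Q').card ≤ 1 := by
    intro Q hQ Q' hQ'
    exact inter_card_le_one hP Q hQ Q' (Finset.mem_of_mem_erase hQ')
      (fun h => (Finset.mem_erase.mp hQ').1 h.symm)
  have hrowle : ∀ Q ∈ P, row Q ≤ c := by
    intro Q hQ
    have e2 : ∑ Q' ∈ P.erase Q, ((Q ∩ Q').card : ℝ) ≤ (m : ℝ) - 1 := by
      calc ∑ Q' ∈ P.erase Q, ((Q ∩ Q').card : ℝ) ≤ ∑ _Q' ∈ P.erase Q, (1:ℝ) := by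
            refine Finset.sum_le_sum fun Q' hQ' => ?_
            exact_mod_cast hinter_le Q hQ Q' hQ'
      _ = ((P.erase Q).card : ℝ) := by rw [Finset.sum_const, nsmul_eq_mul, mul_one]
      _ = (m : ℝ) - 1 := by
            rw [Finset.card_erase_of_mem hQ, ← hm]
            push_cast [Nat.cast_sub hm1]
            ring
    have e3 : (Q.card : ℝ) ≤ (ω : ℝ) := by exact_mod_cast hQω Q hQ
    rw [hrow_split Q hQ, hcdef]
    linarith
  have hup : L ≤ c * X := by
    have h1 : ∑ Q ∈ P, row Q * S Q ^ 2 ≤ c * L := by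
      rw [hLdef, Finset.mul_sum]
      exact Finset.sum_le_sum fun Q hQ =>
        mul_le_mul_of_nonneg_right (hrowle Q hQ) (sq_nonneg _)
    have h2 : L ^ 2 ≤ X * (c * L) := by
      calc L ^ 2 ≤ X * ∑ v, z v ^ 2 := hCS
      _ = X * ∑ Q ∈ P, ∑ Q' ∈ P, ((Q ∩ Q').card : ℝ) * (S Q * S Q') := by rw [hz2]
      _ ≤ X * ∑ Q ∈ P, row Q * S Q ^ 2 := by
            exact mul_le_mul_of_nonneg_left hz2le (le_of_lt hXpos)
      _ ≤ X * (c * L) := mul_le_mul_of_nonneg_left h1 (le_of_lt hXpos)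
    nlinarith
  have hckey : c = ρ + (k : ℝ) := by
    have hcp : (m : ℝ) = (cp G : ℝ) := by exact_mod_cast hPcard
    rw [hcdef, hcp, heq]
    ring
  have hL_eq : L = c * X := by
    refine le_antisymm hup ?_
    rw [hckey]
    exact hlow
  -- all vertices lie in exactly k cliques
  have hdeq : ∀ v, (d v : ℝ) = (k : ℝ) := by
    have hsumd : ∑ v, (d v : ℝ) * x v ^ 2 = (k : ℝ) * X := by
      have h1 : L = ρ * X + ∑ v, (d v : ℝ) * x v ^ 2 := hLeq
      have h2 : L = (ρ + (k : ℝ)) * X := by rw [hL_eq, hckey]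
      nlinarith
    have hsum0 : ∑ v, ((d v : ℝ) - (k : ℝ)) * x v ^ 2 = 0 := by
      have e : ∑ v, ((d v : ℝ) - (k : ℝ)) * x v ^ 2
          = (∑ v, (d v : ℝ) * x v ^ 2) - (k : ℝ) * X := by
        rw [hX, Finset.mul_sum, ← Finset.sum_sub_distrib]
        refine Finset.sum_congr rfl fun v _ => ?_
        ring
      rw [e, hsumd]
      ring
    intro v
    have h := (Finset.sum_eq_zero_iff_of_nonneg (fun v _ =>
      mul_nonneg (sub_nonneg.mpr (hdk v)) (sq_nonneg (x v)))).mp hsum0 v (Finset.mem_univ v)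
    have hx2 : x v ^ 2 ≠ 0 := ne_of_gt (pow_pos (hxpos v) 2)
    rcases mul_eq_zero.mp h with h' | h'
    · linarith [sub_eq_zero.mp h']
    · exact absurd h' hx2
  -- every clique has full row sum
  have hrow_eq : ∀ Q ∈ P, row Q = c := by
    have hchain : X * ∑ Q ∈ P, row Q * S Q ^ 2 = X * (c * L) := by
      have h1 : ∑ Q ∈ P, row Q * S Q ^ 2 ≤ c * L := by
        rw [hLdef, Finset.mul_sum]
        exact Finset.sum_le_sum fun Q hQ =>
          mul_le_mul_of_nonneg_right (hrowle Q hQ) (sq_nonneg _)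
      have h2 : L ^ 2 = X * (c * L) := by rw [hL_eq]; ring
      have h3 : L ^ 2 ≤ X * ∑ v, z v ^ 2 := hCS
      have h4 : X * ∑ v, z v ^ 2 ≤ X * ∑ Q ∈ P, row Q * S Q ^ 2 := by
        rw [hz2]
        exact mul_le_mul_of_nonneg_left hz2le (le_of_lt hXpos)
      have h5 : X * ∑ Q ∈ P, row Q * S Q ^ 2 ≤ X * (c * L) :=
        mul_le_mul_of_nonneg_left h1 (le_of_lt hXpos)
      linarith
    have hrowsum : ∑ Q ∈ P, row Q * S Q ^ 2 = c * L :=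
      mul_left_cancel₀ (ne_of_gt hXpos) hchain
    have hsum0 : ∑ Q ∈ P, (c - row Q) * S Q ^ 2 = 0 := by
      have e : ∑ Q ∈ P, (c - row Q) * S Q ^ 2
          = c * L - ∑ Q ∈ P, row Q * S Q ^ 2 := by
        rw [hLdef, Finset.mul_sum, ← Finset.sum_sub_distrib]
        refine Finset.sum_congr rfl fun Q _ => ?_
        ring
      rw [e, hrowsum]
      ring
    intro Q hQ
    have h := (Finset.sum_eq_zero_iff_of_nonneg (fun Q hQ =>
      mul_nonneg (sub_nonneg.mpr (hrowle Q hQ)) (sq_nonneg (S Q)))).mp hsum0 Q hQ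
    have hx2 : S Q ^ 2 ≠ 0 := ne_of_gt (pow_pos (hSpos Q hQ) 2)
    rcases mul_eq_zero.mp h with h' | h'
    · linarith [sub_eq_zero.mp h']
    · exact absurd h' hx2
  -- extract: every clique has size ω, pairwise intersections have size 1
  have hsize : ∀ Q ∈ P, Q.card = ω ∧ ∀ Q' ∈ P, Q' ≠ Q → (Q ∩ Q').card = 1 := by
    intro Q hQ
    have hNat : Q.card + ∑ Q' ∈ P.erase Q, (Q ∩ Q').card = ω + (m - 1) := by
      have hreal : ((Q.card + ∑ Q' ∈ P.erase Q, (Q ∩ Q').card : ℕ) : ℝ)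
          = ((ω + (m - 1) : ℕ) : ℝ) := by
        push_cast [Nat.cast_sub hm1]
        have h1 := hrow_eq Q hQ
        rw [hrow_split Q hQ] at h1
        rw [hcdef] at h1
        push_cast at h1
        linarith
      exact_mod_cast hreal
    have hb1 : Q.card ≤ ω := hQω Q hQ
    have hb2 : ∑ Q' ∈ P.erase Q, (Q ∩ Q').card ≤ m - 1 := by
      calc ∑ Q' ∈ P.erase Q, (Q ∩ Q').card ≤ ∑ _Q' ∈ P.erase Q, 1 :=
            Finset.sum_le_sum fun Q' hQ' => hinter_le Q hQ Q' hQ'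
      _ = (P.erase Q).card := by rw [Finset.sum_const, smul_eq_mul, mul_one]
      _ = m - 1 := Finset.card_erase_of_mem hQ
    have hQcard : Q.card = ω := by omega
    have hsumeq : ∑ Q' ∈ P.erase Q, (Q ∩ Q').card = m - 1 := by omega
    refine ⟨hQcard, fun Q' hQ' hne => ?_⟩
    have hQ'e : Q' ∈ P.erase Q := Finset.mem_erase.mpr ⟨hne, hQ'⟩
    by_contra hne1
    have hlt : (Q ∩ Q').card < 1 :=
      lt_of_le_of_ne (hinter_le Q hQ Q' hQ'e) hne1
    have hstrict : ∑ Q'' ∈ P.erase Q, (Q ∩ Q'').card < ∑ _Q'' ∈ P.erase Q, 1 :=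
      Finset.sum_lt_sum (fun Q'' hQ'' => hinter_le Q hQ Q'' hQ'') ⟨Q', hQ'e, hlt⟩
    rw [Finset.sum_const, smul_eq_mul, mul_one, Finset.card_erase_of_mem hQ] at hstrict
    omega
  -- regularity
  have hdconst : ∀ u v : V, d u = d v := by
    intro u v
    have h1 := hdeq u
    have h2 := hdeq v
    have : (d u : ℝ) = (d v : ℝ) := by rw [h1, h2]
    exact_mod_cast this
  have hdeg : ∀ v, G.degree v = d v * (ω - 1) := by
    intro v
    rw [degree_eq_sum G hP v]
    calc ∑ Q ∈ P.filter (v ∈ ·), (Q.card - 1)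
        = ∑ _Q ∈ P.filter (v ∈ ·), (ω - 1) := by
          refine Finset.sum_congr rfl fun Q hQ => ?_
          rw [(hsize Q (Finset.mem_filter.mp hQ).1).1]
    _ = d v * (ω - 1) := by rw [Finset.sum_const, smul_eq_mul]
  have hreg : G.IsRegularOfDegree (d u₀ * (ω - 1)) := by
    intro v
    rw [hdeg v, hdconst v u₀]
  have hmind : δ = d u₀ * (ω - 1) := by
    obtain ⟨w, hw⟩ := G.exists_minimal_degree_vertex
    rw [hδ, hw, hreg w]
  refine ⟨?_, ⟨_, hreg⟩, P, hP, fun s hs => (hsize s hs).1, ?_⟩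
  · rw [hmind]
    exact dvd_mul_left _ _
  · intro s₁ h₁ s₂ h₂ hne
    exact (hsize s₁ h₁).2 s₂ h₂ (Ne.symm hne)
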